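/- Let g(σ) = Σ_{l=0}^{p} γ_l σ^l be a scalar polynomial and let σ = ṽz + v̂u where ṽ, z and v̂, u are such that ṽz and v̂u are scalars (row-vector times column-vector products). Then g(ṽz + v̂u) = Σ_{l=0}^{p} γ_l ṽ^{(l)} z^{(l)} + (Σ_{l=1}^{p} γ_l Σ_{k=1}^{l} C(l,k) ṽ^{(l-k)} z^{(l-k)} v̂^{(k)} (I_{n_u} ⊗ u^{(k-1)})) u, where M^{(j)} denotes the j-th Kronecker power, C(l,k) is the binomial coefficient, and u^{(k)} = (I_{n_u} ⊗ u^{(k-1)}) u. -/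
import Mathlib


open Matrix Finset

/-- Kronecker product of `Fin`-indexed real matrices, with flattened index types. -/
def kron {m n p q : ℕ} (A : Matrix (Fin m) (Fin n) ℝ) (B : Matrix (Fin p) (Fin q) ℝ) :
    Matrix (Fin (m * p)) (Fin (n * q)) ℝ :=
  Matrix.reindex finProdFinEquiv finProdFinEquiv (A.kroneckerMap (· * ·) B)

/-- Cast a matrix along equalities of its `Fin` dimensions. -/
def mcast {m n m' n' : ℕ} (hm : m = m') (hn : n = n') (A : Matrix (Fin m) (Fin n) ℝ) :
    Matrix (Fin m') (Fin n') ℝ :=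
  Matrix.reindex (finCongr hm) (finCongr hn) A

/-- `k`-th Kronecker power of a matrix, `M^{(0)} = 1` and `M^{(k+1)} = M^{(k)} ⊗ M`. -/
def kronPow {m n : ℕ} : (k : ℕ) → Matrix (Fin m) (Fin n) ℝ → Matrix (Fin (m ^ k)) (Fin (n ^ k)) ℝ
  | 0, _ => mcast rfl rfl (1 : Matrix (Fin 1) (Fin 1) ℝ)
  | k + 1, A => mcast (pow_succ m k).symm (pow_succ n k).symm (kron (kronPow k A) A)

/-- The unique entry of a `1×1`-sized matrix. -/
def scal {a b : ℕ} (A : Matrix (Fin a) (Fin b) ℝ) (ha : a = 1) (hb : b = 1) : ℝ :=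
  A (finCongr ha.symm 0) (finCongr hb.symm 0)

theorem mcast_mul {a b c a' b' c' : ℕ} (h1 : a = a') (h2 h2' : b = b') (h3 : c = c')
    (A : Matrix (Fin a) (Fin b) ℝ) (B : Matrix (Fin b) (Fin c) ℝ) :
    mcast h1 h2 A * mcast h2' h3 B = mcast h1 h3 (A * B) := by
  subst h1; subst h2; subst h3; rfl

theorem kron_mul {a b c d e f : ℕ} (A : Matrix (Fin a) (Fin b) ℝ) (B : Matrix (Fin b) (Fin c) ℝ)
    (C : Matrix (Fin d) (Fin e) ℝ) (D : Matrix (Fin e) (Fin f) ℝ) :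
    kron A C * kron B D = kron (A * B) (C * D) := by
  unfold kron
  rw [Matrix.reindex_apply, Matrix.reindex_apply, Matrix.reindex_apply,
    Matrix.submatrix_mul_equiv, ← Matrix.mul_kronecker_mul]

theorem kron_apply' {a b c d : ℕ} (A : Matrix (Fin a) (Fin b) ℝ) (B : Matrix (Fin c) (Fin d) ℝ)
    (i1 : Fin a) (i2 : Fin c) (j1 : Fin b) (j2 : Fin d) :
    kron A B (finProdFinEquiv (i1, i2)) (finProdFinEquiv (j1, j2)) = A i1 j1 * B i2 j2 := by
  simp [kron]

theorem mcast_kron_left {a b a' b' c d : ℕ} (h1 : a = a') (h2 : b = b')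
    (A : Matrix (Fin a) (Fin b) ℝ) (B : Matrix (Fin c) (Fin d) ℝ) :
    kron (mcast h1 h2 A) B = mcast (by rw [h1]) (by rw [h2]) (kron A B) := by
  subst h1; subst h2; rfl

theorem mcast_kron_right {a b c d c' d' : ℕ} (h1 : c = c') (h2 : d = d')
    (A : Matrix (Fin a) (Fin b) ℝ) (B : Matrix (Fin c) (Fin d) ℝ) :
    kron A (mcast h1 h2 B) = mcast (by rw [h1]) (by rw [h2]) (kron A B) := by
  subst h1; subst h2; rfl

theorem finCongr_assoc {m p s : ℕ} (a : Fin m) (b : Fin p) (c : Fin s) :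
    finCongr (mul_assoc m p s) (finProdFinEquiv (finProdFinEquiv (a, b), c)) =
      finProdFinEquiv (a, finProdFinEquiv (b, c)) := by
  apply Fin.ext
  simp [finProdFinEquiv, mul_comm, mul_assoc, mul_left_comm]
  ring

theorem kron_assoc {m n p q s t : ℕ} (A : Matrix (Fin m) (Fin n) ℝ)
    (B : Matrix (Fin p) (Fin q) ℝ) (C : Matrix (Fin s) (Fin t) ℝ) :
    kron (kron A B) C = mcast (mul_assoc m p s).symm (mul_assoc n q t).symm (kron A (kron B C)) := by
  ext i j
  obtain ⟨⟨x, c⟩, rfl⟩ := finProdFinEquiv.surjective i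
  obtain ⟨⟨a, b⟩, rfl⟩ := finProdFinEquiv.surjective x
  obtain ⟨⟨y, f⟩, rfl⟩ := finProdFinEquiv.surjective j
  obtain ⟨⟨d, e⟩, rfl⟩ := finProdFinEquiv.surjective y
  rw [kron_apply', kron_apply']
  show _ = kron A (kron B C) (finCongr (mul_assoc m p s) _) (finCongr (mul_assoc n q t) _)
  rw [finCongr_assoc, finCongr_assoc, kron_apply', kron_apply']
  ring

theorem kron_one_left {m n : ℕ} (A : Matrix (Fin m) (Fin n) ℝ) :
    kron (1 : Matrix (Fin 1) (Fin 1) ℝ) A = mcast (one_mul m).symm (one_mul n).symm A := by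
  ext i j
  obtain ⟨⟨a, b⟩, rfl⟩ := finProdFinEquiv.surjective i
  obtain ⟨⟨c, d⟩, rfl⟩ := finProdFinEquiv.surjective j
  rw [kron_apply']
  have ha : a = 0 := Subsingleton.elim _ _
  have hc : c = 0 := Subsingleton.elim _ _
  subst ha; subst hc
  show _ = A (finCongr (one_mul m) _) (finCongr (one_mul n) _)
  have h1 : finCongr (one_mul m) (finProdFinEquiv ((0 : Fin 1), b)) = b := by
    apply Fin.ext; simp [finProdFinEquiv]
  have h2 : finCongr (one_mul n) (finProdFinEquiv ((0 : Fin 1), d)) = d := by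
    apply Fin.ext; simp [finProdFinEquiv]
  rw [h1, h2, Matrix.one_apply_eq]
  ring

theorem kron_one_right {m n : ℕ} (A : Matrix (Fin m) (Fin n) ℝ) :
    kron A (1 : Matrix (Fin 1) (Fin 1) ℝ) = mcast (mul_one m).symm (mul_one n).symm A := by
  ext i j
  obtain ⟨⟨a, b⟩, rfl⟩ := finProdFinEquiv.surjective i
  obtain ⟨⟨c, d⟩, rfl⟩ := finProdFinEquiv.surjective j
  rw [kron_apply']
  have hb : b = 0 := Subsingleton.elim _ _
  have hd : d = 0 := Subsingleton.elim _ _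
  subst hb; subst hd
  show _ = A (finCongr (mul_one m) _) (finCongr (mul_one n) _)
  have h1 : finCongr (mul_one m) (finProdFinEquiv (a, (0 : Fin 1))) = a := by
    apply Fin.ext; simp [finProdFinEquiv]
  have h2 : finCongr (mul_one n) (finProdFinEquiv (c, (0 : Fin 1))) = c := by
    apply Fin.ext; simp [finProdFinEquiv]
  rw [h1, h2, Matrix.one_apply_eq]
  ring

theorem kronPow_succ' {m n : ℕ} (k : ℕ) (A : Matrix (Fin m) (Fin n) ℝ) :
    kronPow (k + 1) A = mcast (pow_succ' m k).symm (pow_succ' n k).symm (kron A (kronPow k A)) := by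
  induction k with
  | zero =>
    show mcast _ _ (kron (mcast rfl rfl (1 : Matrix (Fin 1) (Fin 1) ℝ)) A)
      = mcast _ _ (kron A (mcast rfl rfl (1 : Matrix (Fin 1) (Fin 1) ℝ)))
    rw [show (mcast rfl rfl (1 : Matrix (Fin 1) (Fin 1) ℝ)) = 1 from rfl,
      kron_one_left, kron_one_right]
    rfl
  | succ k ih =>
    show mcast (pow_succ m (k+1)).symm (pow_succ n (k+1)).symm (kron (kronPow (k+1) A) A) = _
    conv_lhs => rw [ih, mcast_kron_left, kron_assoc,
      show kron (kronPow k A) A = mcast (pow_succ m k) (pow_succ n k) (kronPow (k+1) A) from rfl,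
      mcast_kron_right]
    rfl

theorem scal_mcast {a b a' b' : ℕ} (h1 : a = a') (h2 : b = b') (ha : a' = 1) (hb : b' = 1)
    (A : Matrix (Fin a) (Fin b) ℝ) :
    scal (mcast h1 h2 A) ha hb = scal A (h1.trans ha) (h2.trans hb) := by
  subst h1; subst h2; rfl

theorem scal_one : scal (1 : Matrix (Fin 1) (Fin 1) ℝ) rfl rfl = 1 := by
  simp [scal]

theorem scal_smul {a b : ℕ} (c : ℝ) (A : Matrix (Fin a) (Fin b) ℝ) (ha : a = 1) (hb : b = 1) :
    scal (c • A) ha hb = c * scal A ha hb := rfl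

theorem scal_kron {a b c d : ℕ} (ha : a = 1) (hb : b = 1) (hc : c = 1) (hd : d = 1)
    (h1 : a * c = 1) (h2 : b * d = 1)
    (A : Matrix (Fin a) (Fin b) ℝ) (B : Matrix (Fin c) (Fin d) ℝ) :
    scal (kron A B) h1 h2 = scal A ha hb * scal B hc hd := by
  subst ha; subst hb; subst hc; subst hd
  show kron A B (finCongr rfl (finProdFinEquiv (0, 0))) (finCongr rfl (finProdFinEquiv (0, 0)))
      = _
  rw [show finCongr rfl (finProdFinEquiv ((0 : Fin 1), (0 : Fin 1)))
      = finProdFinEquiv ((0 : Fin 1), (0 : Fin 1)) from rfl, kron_apply']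
  rfl

theorem scal_kronPow_mul {n : ℕ} (A : Matrix (Fin 1) (Fin n) ℝ) (B : Matrix (Fin n) (Fin 1) ℝ)
    (l : ℕ) (h1 h2 : (1:ℕ) ^ l = 1) :
    scal (kronPow l A * kronPow l B) h1 h2 = scal (A * B) rfl rfl ^ l := by
  induction l with
  | zero =>
    show scal (mcast rfl rfl (1 : Matrix (Fin 1) (Fin 1) ℝ)
      * mcast rfl rfl (1 : Matrix (Fin 1) (Fin 1) ℝ)) h1 h2 = 1
    rw [mcast_mul]
    rw [scal_mcast, mul_one]
    exact scal_one
  | succ l ih =>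
    show scal (mcast (pow_succ 1 l).symm (pow_succ n l).symm (kron (kronPow l A) A)
      * mcast (pow_succ n l).symm (pow_succ 1 l).symm (kron (kronPow l B) B)) h1 h2 = _
    rw [mcast_mul, kron_mul, scal_mcast,
      scal_kron (one_pow l) (one_pow l) rfl rfl, ih, pow_succ]

theorem kron_smul_right {a b c d : ℕ} (r : ℝ) (A : Matrix (Fin a) (Fin b) ℝ)
    (B : Matrix (Fin c) (Fin d) ℝ) : kron A (r • B) = r • kron A B := by
  ext i j
  simp [kron, Matrix.smul_apply, smul_eq_mul]
  ring

theorem one_one_eq {a b : ℕ} (ha : a = 1) (hb : b = 1) (W : Matrix (Fin a) (Fin b) ℝ) :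
    W = mcast ha.symm hb.symm (scal W ha hb • (1 : Matrix (Fin 1) (Fin 1) ℝ)) := by
  subst ha; subst hb
  ext i j
  have : i = 0 := Subsingleton.elim _ _
  have hj : j = 0 := Subsingleton.elim _ _
  subst this; subst hj
  simp [scal, mcast, Matrix.smul_apply, Matrix.one_apply]

theorem row_scalar {nu a b : ℕ} (ha : a = 1) (hb : b = 1) (e1 : 1 * a = 1) (e : nu * b = nu)
    (vh : Matrix (Fin 1) (Fin nu) ℝ) (W : Matrix (Fin a) (Fin b) ℝ) :
    mcast e1 e (kron vh W) = scal W ha hb • vh := by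
  subst ha; subst hb
  conv_lhs => rw [one_one_eq rfl rfl W, mcast_kron_right, kron_smul_right, kron_one_right]
  rfl

theorem mcast_mul_left {a a' b c : ℕ} (h : a = a') (A : Matrix (Fin a) (Fin b) ℝ)
    (B : Matrix (Fin b) (Fin c) ℝ) : mcast h rfl A * B = mcast h rfl (A * B) := by
  subst h; rfl

theorem input_term {nu : ℕ} (vh : Matrix (Fin 1) (Fin nu) ℝ) (u : Matrix (Fin nu) (Fin 1) ℝ)
    (k : ℕ) (e : nu * 1 ^ k = nu) (e2 : (1:ℕ) ^ (k+1) = 1) (e3 : nu ^ (k+1) = nu * nu ^ k) :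
    scal ((mcast rfl e (mcast e2 e3 (kronPow (k + 1) vh)
        * kron (1 : Matrix (Fin nu) (Fin nu) ℝ) (kronPow k u))) * u) rfl rfl
      = scal (vh * u) rfl rfl ^ (k + 1) := by
  rw [kronPow_succ']
  rw [show mcast e2 e3 (mcast (pow_succ' 1 k).symm (pow_succ' nu k).symm (kron vh (kronPow k vh)))
      = mcast (by simp : 1 * 1 ^ k = 1) rfl (kron vh (kronPow k vh)) from rfl]
  rw [mcast_mul_left, kron_mul, Matrix.mul_one]
  rw [show mcast rfl e (mcast (by simp : 1 * 1 ^ k = 1) rfl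
        (kron vh (kronPow k vh * kronPow k u)))
      = mcast (by simp) e (kron vh (kronPow k vh * kronPow k u)) from rfl]
  rw [row_scalar (one_pow k) (one_pow k), Matrix.smul_mul, scal_smul,
    scal_kronPow_mul, pow_succ]

theorem scal_sum {a b : ℕ} {ι : Type*} (s : Finset ι) (f : ι → Matrix (Fin a) (Fin b) ℝ)
    (ha : a = 1) (hb : b = 1) :
    scal (∑ i ∈ s, f i) ha hb = ∑ i ∈ s, scal (f i) ha hb := by
  simp [scal, Matrix.sum_apply]

theorem binom_aux (a b : ℝ) (l : ℕ) :
    ∑ k ∈ Finset.range l, (l.choose (k+1) : ℝ) * (a ^ (l - (k+1)) * b ^ (k+1))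
      = ∑ k ∈ Finset.range l, a ^ k * b ^ (l - k) * (l.choose k : ℝ) := by
  rw [← Finset.sum_range_reflect (fun k => a ^ k * b ^ (l - k) * (l.choose k : ℝ)) l]
  refine Finset.sum_congr rfl fun k hk => ?_
  rw [Finset.mem_range] at hk
  have h1 : l - 1 - k = l - (k + 1) := by omega
  have h2 : l - (l - (k + 1)) = k + 1 := by omega
  have h3 : l.choose (l - (k + 1)) = l.choose (k + 1) := Nat.choose_symm (by omega)
  rw [h1, h2, h3]
  ring

/-- Binomial expansion of a scalar polynomial `g(ṽz + v̂u)` into a part linear in the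
Kronecker lifting of `z` plus a part factored through the input `u`:
`g(ṽz + v̂u) = Σ_l γ_l ṽ^{(l)} z^{(l)}
  + (Σ_l γ_l Σ_k C(l,k) (ṽ^{(l-k)} z^{(l-k)}) v̂^{(k)} (I ⊗ u^{(k-1)})) u`. -/
theorem poly_split_state_input {nz nu : ℕ}
    (vt : Matrix (Fin 1) (Fin nz) ℝ) (z : Matrix (Fin nz) (Fin 1) ℝ)
    (vh : Matrix (Fin 1) (Fin nu) ℝ) (u : Matrix (Fin nu) (Fin 1) ℝ)
    (p : ℕ) (γ : ℕ → ℝ) :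
    ∑ l ∈ Finset.range (p + 1), γ l * (scal (vt * z) rfl rfl + scal (vh * u) rfl rfl) ^ l
    = (∑ l ∈ Finset.range (p + 1),
        γ l * scal (kronPow l vt * kronPow l z) (one_pow l) (one_pow l))
      + scal ((∑ l ∈ Finset.range (p + 1), ∑ k ∈ Finset.range l,
          (γ l * (l.choose (k + 1) : ℝ)) •
            (scal (kronPow (l - (k + 1)) vt * kronPow (l - (k + 1)) z)
                (one_pow _) (one_pow _) •
              mcast rfl (by simp : nu * 1 ^ k = nu)
                (mcast (one_pow (k + 1)) (pow_succ' nu k) (kronPow (k + 1) vh)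
                  * kron (1 : Matrix (Fin nu) (Fin nu) ℝ) (kronPow k u)))) * u) rfl rfl := by
  set a := scal (vt * z) rfl rfl with ha
  set b := scal (vh * u) rfl rfl with hb
  simp only [Matrix.sum_mul, scal_sum, Matrix.smul_mul, scal_smul, input_term,
    scal_kronPow_mul, ← ha, ← hb]
  rw [← Finset.sum_add_distrib]
  refine Finset.sum_congr rfl fun l _ => ?_
  have hbin : (a + b) ^ l
      = a ^ l + ∑ k ∈ Finset.range l, (l.choose (k+1) : ℝ) * (a ^ (l - (k+1)) * b ^ (k+1)) := by
    rw [binom_aux, add_pow, Finset.sum_range_succ]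
    simp [add_comm]
  rw [hbin, mul_add, Finset.mul_sum]
  refine congrArg _ (Finset.sum_congr rfl fun k _ => ?_)
  ring
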